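/- Let R be a ring and 𝒢𝒫(R) the category of Gorenstein projective left R-modules with the exact structure inherited from short exact sequences of modules with all terms Gorenstein projective. Then 𝒢𝒫(R) is a Frobenius exact category whose projective-injective objects are exactly the projective R-modules. -/

import Mathlib

open CategoryTheory CategoryTheory.Limits Opposite

universe u

variable {R : Type u} [Ring R]

/-- `IsSES f g` : `0 → X → Y → Z → 0` is a short exact sequence of `R`-modules. -/
def IsSES {X Y Z : ModuleCat.{u} R} (f : X ⟶ Y) (g : Y ⟶ Z) : Prop :=
  ∃ w : f ≫ g = 0, (ShortComplex.mk f g w).ShortExact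

/-- `N` is Gorenstein projective: it is a syzygy (namely `Ker(P₋₁ → P₋₂)`) of a
totally acyclic complex of projectives, i.e. an exact complex of projective modules
which stays exact after applying `Hom(-, Q)` for every projective `Q`. -/
def IsGorensteinProj (N : ModuleCat.{u} R) : Prop :=
  ∃ P : ChainComplex (ModuleCat.{u} R) ℤ,
    (∀ n : ℤ, Projective (P.X n)) ∧
    (∀ n : ℤ, P.ExactAt n) ∧
    (∀ Q : ModuleCat.{u} R, Projective Q → ∀ n : ℤ, ∀ f : P.X n ⟶ Q,
      P.d (n+1) n ≫ f = 0 → ∃ g : P.X (n-1) ⟶ Q, P.d n (n-1) ≫ g = f) ∧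
    Nonempty (N ≅ kernel (P.d (-1) (-2)))

/-- A short exact sequence all of whose terms are Gorenstein projective: these are
the conflations of the exact structure on `𝒢𝒫(R)`. -/
def GPses {X Y Z : ModuleCat.{u} R} (f : X ⟶ Y) (g : Y ⟶ Z) : Prop :=
  IsSES f g ∧ IsGorensteinProj X ∧ IsGorensteinProj Y ∧ IsGorensteinProj Z

/-- Projective object of the exact category `𝒢𝒫(R)`. -/
def GPrelProj (G : ModuleCat.{u} R) : Prop :=
  IsGorensteinProj G ∧
    ∀ ⦃X Y Z : ModuleCat.{u} R⦄ (f : X ⟶ Y) (g : Y ⟶ Z), GPses f g →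
      ∀ h : G ⟶ Z, ∃ k : G ⟶ Y, k ≫ g = h

/-- Injective object of the exact category `𝒢𝒫(R)`. -/
def GPrelInj (G : ModuleCat.{u} R) : Prop :=
  IsGorensteinProj G ∧
    ∀ ⦃X Y Z : ModuleCat.{u} R⦄ (f : X ⟶ Y) (g : Y ⟶ Z), GPses f g →
      ∀ h : X ⟶ G, ∃ k : Y ⟶ G, f ≫ k = h

namespace GPaux

lemma dcongr_left (P : ChainComplex (ModuleCat.{u} R) ℤ) {a a' b : ℤ} (h : a = a') :
    (P.XIsoOfEq (congrArg id h)).hom ≫ P.d a' b = P.d a b := by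
  subst h; simp [HomologicalComplex.XIsoOfEq]

lemma dcongr_right (P : ChainComplex (ModuleCat.{u} R) ℤ) {a b b' : ℤ} (h : b = b') :
    P.d a b ≫ (P.XIsoOfEq (congrArg id h)).hom = P.d a b' := by
  subst h; simp [HomologicalComplex.XIsoOfEq]

noncomputable def kerCongr (P : ChainComplex (ModuleCat.{u} R) ℤ) {a a' b b' : ℤ}
    (ha : a = a') (hb : b = b') : kernel (P.d a b) ≅ kernel (P.d a' b') := by
  subst ha; subst hb; exact Iso.refl _

lemma gp_iso {M N : ModuleCat.{u} R} (e : M ≅ N) (h : IsGorensteinProj N) :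
    IsGorensteinProj M := by
  obtain ⟨P, h1, h2, h3, ⟨e'⟩⟩ := h
  exact ⟨P, h1, h2, h3, ⟨e ≪≫ e'⟩⟩

/-- elementwise exactness of an exact ℤ-chain complex of modules -/
lemma exact_sc (C : ChainComplex (ModuleCat.{u} R) ℤ) (hex : ∀ n, C.ExactAt n)
    (a b c : ℤ) (hab : b + 1 = a) (hbc : c + 1 = b) :
    ∀ x : C.X b, C.d b c x = 0 → ∃ y, C.d a b y = x := by
  have := (C.exactAt_iff' a b c ((ComplexShape.down ℤ).prev_eq' hab)
    ((ComplexShape.down ℤ).next_eq' hbc)).mp (hex b)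
  rw [ShortComplex.moduleCat_exact_iff] at this
  exact fun x hx => this x hx

/-- the constant complex with alternating identities showing projectives are GP -/
noncomputable def constC (P : ModuleCat.{u} R) : ChainComplex (ModuleCat.{u} R) ℤ where
  X _ := P
  d a b := if b + 1 = a ∧ Even a then 𝟙 P else 0
  shape a b h := by
    rw [if_neg]
    rintro ⟨h1, -⟩
    exact h h1
  d_comp_d' a b c hab hbc := by
    by_cases h1 : b + 1 = a ∧ Even a
    · rw [if_pos h1, if_neg]
      · simp
      rintro ⟨h2, h3⟩
      obtain ⟨h1, h4⟩ := h1
      rw [Int.even_iff] at h3 h4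
      omega
    · rw [if_neg h1, zero_comp]

lemma constC_d_pos (P : ModuleCat.{u} R) {a b : ℤ} (h1 : b + 1 = a) (h2 : Even a) :
    (constC P).d a b = 𝟙 P := by
  simp only [constC]; rw [if_pos ⟨h1, h2⟩]

lemma constC_d_neg (P : ModuleCat.{u} R) {a b : ℤ} (h2 : ¬ Even a) :
    (constC P).d a b = 0 := by
  simp only [constC]; rw [if_neg]; rfl; rintro ⟨-, h⟩; exact h2 h

lemma proj_isGP (P : ModuleCat.{u} R) (hP : Projective P) : IsGorensteinProj P := by
  refine ⟨constC P, fun n => hP, fun n => ?_, fun Q hQ n f hf => ?_, ⟨?_⟩⟩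
  · rw [(constC P).exactAt_iff' (n+1) n (n-1) ((ComplexShape.down ℤ).prev_eq' rfl)
      ((ComplexShape.down ℤ).next_eq' (show n-1+1 = n by omega)), ShortComplex.moduleCat_exact_iff]
    intro x hx
    by_cases h : Even n
    · have h1 : (constC P).d n (n-1) = 𝟙 P := constC_d_pos P (by omega) h
      have hx0 : x = 0 := by
        have : ((constC P).sc' (n+1) n (n-1)).g x = (𝟙 P : P ⟶ P) x := by rw [← h1]; rfl
        rw [hx] at this; exact this.symm
      exact ⟨0, by rw [hx0]; simp⟩
    · have h1 : (constC P).d (n+1) n = 𝟙 P :=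
        constC_d_pos P rfl (by simpa [Int.even_add_one] using h)
      exact ⟨x, by show ((constC P).d (n+1) n) x = x; rw [h1]; rfl⟩
  · by_cases h : Even n
    · refine ⟨f, ?_⟩
      rw [constC_d_pos P (by omega) h]
      ext x
      rfl
    · have h1 : (constC P).d (n+1) n = 𝟙 P :=
        constC_d_pos P rfl (by simpa [Int.even_add_one] using h)
      rw [h1] at hf
      have hf' : f = 0 := (Category.id_comp f).symm.trans hf
      exact ⟨0, by rw [hf', comp_zero]⟩
  · have : (constC P).d (-1) (-2) = 0 :=
      constC_d_neg P (by rw [Int.even_iff]; omega)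
    exact (kernelIsoOfEq this ≪≫ kernelZeroIsoSource).symm
/-- Shift: any kernel of a differential of a totally acyclic complex is GP. -/
lemma gp_shift (C : ChainComplex (ModuleCat.{u} R) ℤ)
    (h1 : ∀ n : ℤ, Projective (C.X n)) (h2 : ∀ n : ℤ, C.ExactAt n)
    (h3 : ∀ Q : ModuleCat.{u} R, Projective Q → ∀ n : ℤ, ∀ f : C.X n ⟶ Q,
      C.d (n+1) n ≫ f = 0 → ∃ g : C.X (n-1) ⟶ Q, C.d n (n-1) ≫ g = f)
    (i : ℤ) : IsGorensteinProj (kernel (C.d i (i-1))) := by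
  set c : ℤ := i + 1 with hc
  refine ⟨{ X := fun n => C.X (n + c), d := fun a b => C.d (a + c) (b + c),
            shape := fun a b hab => C.shape _ _ (fun hr => hab (by change b + c + 1 = a + c at hr; change b + 1 = a; omega)),
            d_comp_d' := fun a b k _ _ => C.d_comp_d _ _ _ },
    fun n => h1 _, fun n => ?_, fun Q hQ n f hf => ?_, ⟨kerCongr C (by omega) (by omega)⟩⟩
  · rw [HomologicalComplex.exactAt_iff' _ (n+1) n (n-1)
      ((ComplexShape.down ℤ).prev_eq' rfl)
      ((ComplexShape.down ℤ).next_eq' (show n-1+1 = n by omega))]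
    have := (C.exactAt_iff' (n+1+c) (n+c) (n-1+c)
      ((ComplexShape.down ℤ).prev_eq' (show (n+c)+1 = n+1+c by omega))
      ((ComplexShape.down ℤ).next_eq' (show (n-1+c)+1 = n+c by omega))).mp (h2 (n+c))
    exact this
  · -- lifting for the shifted complex
    dsimp at f hf ⊢
    have hf' : C.d (n+c+1) (n+c) ≫ f = 0 := by
      rw [← dcongr_left C (show n+c+1 = n+1+c by omega), Category.assoc, hf, comp_zero]
    obtain ⟨g, hg⟩ := h3 Q hQ (n+c) f hf'
    refine ⟨(C.XIsoOfEq (congrArg id (show n-1+c = n+c-1 by omega))).hom ≫ g, ?_⟩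
    rw [← Category.assoc, dcongr_right C (show n-1+c = n+c-1 by omega), hg]

lemma ker_d_eq_range (C : ChainComplex (ModuleCat.{u} R) ℤ) (h2 : ∀ n : ℤ, C.ExactAt n)
    (a b c : ℤ) (hab : b + 1 = a) (hbc : c + 1 = b) :
    LinearMap.ker (C.d b c).hom = LinearMap.range (C.d a b).hom := by
  ext x
  constructor
  · intro hx
    exact exact_sc C h2 a b c hab hbc x hx
  · rintro ⟨y, rfl⟩
    exact ConcreteCategory.congr_hom (C.d_comp_d a b c) y

/-- the canonical projection `C.X 0 ↠ N` for `N ≅ ker (d (-1) (-2))`. -/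
lemma pres (C : ChainComplex (ModuleCat.{u} R) ℤ) (h2 : ∀ n : ℤ, C.ExactAt n)
    {N : ModuleCat.{u} R} (e : N ≅ kernel (C.d (-1) (-2))) :
    ∃ π : C.X 0 ⟶ N, Function.Surjective π ∧
      LinearMap.ker π.hom = LinearMap.ker (C.d 0 (-1)).hom := by
  set κ := ModuleCat.kernelIsoKer (C.d (-1) (-2)) with hκ
  set lft := kernel.lift (C.d (-1) (-2)) (C.d 0 (-1)) (C.d_comp_d 0 (-1) (-2)) with hlft
  set sub : ModuleCat.of R (LinearMap.ker (C.d (-1) (-2)).hom) ⟶ C.X (-1) :=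
    ModuleCat.ofHom (LinearMap.ker (C.d (-1) (-2)).hom).subtype with hsub
  have hκinj : Function.Injective κ.hom :=
    (ModuleCat.mono_iff_injective κ.hom).1 inferInstance
  have hsubinj : Function.Injective sub := Subtype.val_injective
  have hmem : ∀ y : ModuleCat.of R (LinearMap.ker (C.d (-1) (-2)).hom),
      C.d (-1) (-2) (sub y) = 0 := fun y => y.2
  have hL : ∀ x : C.X 0, sub (κ.hom (lft x)) = C.d 0 (-1) x := by
    intro x
    have h1 : lft ≫ κ.hom ≫ sub = C.d 0 (-1) := by
      rw [hsub, ModuleCat.kernelIsoKer_hom_ker_subtype, kernel.lift_ι]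
    exact ConcreteCategory.congr_hom h1 x
  have hsur : Function.Surjective lft := by
    intro k
    obtain ⟨x, hx⟩ := exact_sc C h2 0 (-1) (-2) (by omega) (by omega) (sub (κ.hom k))
      (hmem _)
    refine ⟨x, hκinj (hsubinj ?_)⟩
    rw [hL, hx]
  have hkerlft : ∀ x : C.X 0, lft x = 0 ↔ C.d 0 (-1) x = 0 := by
    intro x
    constructor
    · intro hx
      rw [← hL x, hx]
      simp
    · intro hx
      apply hκinj
      apply hsubinj
      rw [hL x, hx]
      simp
  refine ⟨lft ≫ e.inv, ?_, ?_⟩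
  · have h1 : Function.Surjective e.inv :=
      (ModuleCat.mono_iff_injective (e.inv)).2 ((ModuleCat.mono_iff_injective (e.inv)).1 inferInstance) |> fun _ => (ModuleCat.epi_iff_surjective (e.inv)).1 inferInstance
    change Function.Surjective (e.inv ∘ lft)
    exact Function.Surjective.comp h1 hsur
  · ext x
    have heinj : Function.Injective e.inv :=
      (ModuleCat.mono_iff_injective (e.inv)).1 inferInstance
    simp only [LinearMap.mem_ker]
    show e.inv (lft x) = 0 ↔ _
    rw [show (0 : N) = e.inv 0 by rw [map_zero]]
    rw [heinj.eq_iff]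
    exact hkerlft x

/-- THE key homological lemma: maps from `X` to a projective `G` extend along
`f` in a short exact sequence `0 → X → Y → Z → 0` with `Z` Gorenstein projective. -/
lemma key_ext {X Y Z G : ModuleCat.{u} R} (f : X ⟶ Y) (g : Y ⟶ Z)
    (hses : IsSES f g) (hZ : IsGorensteinProj Z) (hG : Projective G) (h : X ⟶ G) :
    ∃ k : Y ⟶ G, f ≫ k = h := by
  obtain ⟨w, hse⟩ := hses
  have hfi : Function.Injective f :=
    (ModuleCat.mono_iff_injective (ShortComplex.mk f g w).f).1 hse.mono_f
  have hgs : Function.Surjective g :=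
    (ModuleCat.epi_iff_surjective (ShortComplex.mk f g w).g).1 hse.epi_g
  have hrange : LinearMap.range f.hom = LinearMap.ker g.hom := hse.exact.moduleCat_range_eq_ker
  obtain ⟨C, h1, h2, h3, ⟨e⟩⟩ := hZ
  obtain ⟨π, hπs, hπk⟩ := pres C h2 e
  have hπk' : LinearMap.ker π.hom = LinearMap.range (C.d 1 0).hom := by
    rw [hπk, ker_d_eq_range C h2 1 0 (-1) (by omega) (by omega)]
  haveI : Epi g := (ModuleCat.epi_iff_surjective g).2 hgs
  haveI : Projective (C.X 0) := h1 0
  set φ : C.X 0 ⟶ Y := Projective.factorThru π g with hφdef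
  have hφ : φ ≫ g = π := Projective.factorThru_comp _ _
  have hgφ : ∀ u, g (φ u) = π u := fun u => ConcreteCategory.congr_hom hφ u
  have hmem1 : ∀ x : C.X 1, φ (C.d 1 0 x) ∈ LinearMap.range f.hom := by
    intro x
    rw [hrange, LinearMap.mem_ker, hgφ]
    have : C.d 1 0 x ∈ LinearMap.ker π.hom := by rw [hπk']; exact ⟨x, rfl⟩
    exact this
  set E := LinearEquiv.ofInjective f.hom hfi with hE
  have hfE : ∀ v : LinearMap.range f.hom, f (E.symm v) = (v : Y) := by
    intro v
    have h1 := E.apply_symm_apply v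
    have h2 := LinearEquiv.ofInjective_apply f.hom (h := hfi) (E.symm v)
    rw [← hE] at h2
    rw [← h2, h1]
  set ψ : C.X 1 ⟶ X :=
    ModuleCat.ofHom (E.symm.toLinearMap.comp
      (LinearMap.codRestrict (LinearMap.range f.hom)
        (φ.hom.comp (C.d 1 0).hom) hmem1) : C.X 1 →ₗ[R] X) with hψdef
  have hψ : ∀ x, f (ψ x) = φ (C.d 1 0 x) := by
    intro x
    exact hfE ⟨φ (C.d 1 0 x), hmem1 x⟩
  have hψ2 : ∀ x2 : C.X (1+1), ψ (C.d (1+1) 1 x2) = 0 := by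
    intro x2
    apply hfi
    rw [hψ, map_zero]
    have hd : C.d 1 0 (C.d (1+1) 1 x2) = 0 := ConcreteCategory.congr_hom (C.d_comp_d (1+1) 1 0) x2
    rw [hd, map_zero]
  have hcond : C.d (1+1) 1 ≫ (ψ ≫ h) = 0 := by
    ext x2
    show h (ψ (C.d (1+1) 1 x2)) = 0
    rw [hψ2, map_zero]
  obtain ⟨γ, hγ⟩ := h3 G hG 1 (ψ ≫ h) hcond
  have hγ' : ∀ x : C.X 1, γ (C.d 1 0 x) = h (ψ x) := fun x => ConcreteCategory.congr_hom hγ x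
  -- the pullback of g and π
  set p1 : (Y × C.X 0) →ₗ[R] Z :=
    g.hom.comp (LinearMap.fst R Y (C.X 0)) -
      π.hom.comp (LinearMap.snd R Y (C.X 0)) with hp1
  set S := LinearMap.ker p1 with hSdef
  have hSmem : ∀ s : Y × C.X 0, s ∈ S ↔ g s.1 = π s.2 := by
    intro s
    simp [hSdef, hp1, LinearMap.mem_ker, sub_eq_zero]
  set pY : S →ₗ[R] Y := (LinearMap.fst R Y (C.X 0)).comp S.subtype with hpY
  have hpYs : Function.Surjective pY := by
    intro y
    obtain ⟨p, hp⟩ := hπs (g y)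
    exact ⟨⟨(y, p), (hSmem _).2 hp.symm⟩, rfl⟩
  have hmem2 : ∀ s : S, (s : Y × C.X 0).1 - φ (s : Y × C.X 0).2 ∈
      LinearMap.range f.hom := by
    intro s
    rw [hrange, LinearMap.mem_ker, map_sub, hgφ, (hSmem _).1 s.2, sub_self]
  set q : S →ₗ[R] (LinearMap.range f.hom) :=
    LinearMap.codRestrict _
      ((LinearMap.fst R Y (C.X 0) - φ.hom.comp (LinearMap.snd R Y (C.X 0))).comp
        S.subtype) (fun s => hmem2 s) with hq
  have hfq : ∀ s : S, f (E.symm (q s)) = (s : Y × C.X 0).1 - φ (s : Y × C.X 0).2 :=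
    fun s => hfE (q s)
  set t : S →ₗ[R] G :=
    h.hom.comp (E.symm.toLinearMap.comp q) +
      γ.hom.comp ((LinearMap.snd R Y (C.X 0)).comp S.subtype) with ht
  have htapp : ∀ s : S, t s = h (E.symm (q s)) + γ (s : Y × C.X 0).2 := fun s => rfl
  have hker : LinearMap.ker pY ≤ LinearMap.ker t := by
    intro s hs
    have h0 : (s : Y × C.X 0).1 = 0 := hs
    have hπ0 : π (s : Y × C.X 0).2 = 0 := by rw [← (hSmem _).1 s.2, h0, map_zero]
    obtain ⟨w1, hw1⟩ : (s : Y × C.X 0).2 ∈ LinearMap.range (C.d 1 0).hom := by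
      rw [← hπk']
      exact hπ0
    have hq1 : E.symm (q s) = - ψ w1 := by
      apply hfi
      rw [hfq, h0, map_neg, hψ, hw1, zero_sub]
    rw [LinearMap.mem_ker, htapp, hq1, ← hw1, hγ', map_neg, neg_add_cancel]
  set quot := LinearMap.quotKerEquivOfSurjective pY hpYs with hquot
  set k : Y →ₗ[R] G := ((LinearMap.ker pY).liftQ t hker).comp (quot.symm.toLinearMap) with hk
  refine ⟨ModuleCat.ofHom k, ?_⟩
  ext x
  show k (f x) = h x
  have hgfx : g (f x) = 0 := by
    have : f x ∈ LinearMap.ker g.hom := hrange ▸ (⟨x, rfl⟩ : f x ∈ LinearMap.range f.hom)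
    exact this
  have hs0 : ((f x, 0) : Y × C.X 0) ∈ S := (hSmem _).2 (by rw [hgfx, map_zero])
  set s0 : S := ⟨(f x, 0), hs0⟩ with hs0def
  have hq0 : quot.symm (f x) = Submodule.Quotient.mk s0 := by
    apply quot.injective
    rw [LinearEquiv.apply_symm_apply]
    show (f x : Y) = _
    have : quot (Submodule.Quotient.mk s0) = pY s0 := by
      rw [hquot]
      rfl
    rw [this]
    rfl
  show ((LinearMap.ker pY).liftQ t hker) (quot.symm (f x)) = h x
  rw [hq0, Submodule.liftQ_apply, htapp]
  have hEx : E.symm (q s0) = x := by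
    apply hfi
    rw [hfq]
    show f x - φ 0 = f x
    rw [map_zero, sub_zero]
  rw [hEx]
  show h x + γ 0 = h x
  rw [map_zero, add_zero]

/-- Part 4: every GP module is a quotient of a projective with GP kernel. -/
lemma ses_onto (N : ModuleCat.{u} R) (hN : IsGorensteinProj N) :
    ∃ (K P : ModuleCat.{u} R) (f : K ⟶ P) (g : P ⟶ N),
      IsGorensteinProj K ∧ Projective P ∧ IsSES f g := by
  obtain ⟨C, h1, h2, h3, ⟨e⟩⟩ := hN
  obtain ⟨π, hπs, hπk⟩ := pres C h2 e
  set fsub : ModuleCat.of R (LinearMap.ker (C.d 0 (-1)).hom) ⟶ C.X 0 :=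
    ModuleCat.ofHom ((LinearMap.ker (C.d 0 (-1)).hom).subtype :
      ↥(LinearMap.ker (C.d 0 (-1)).hom) →ₗ[R] C.X 0) with hfsub
  refine ⟨ModuleCat.of R (LinearMap.ker (C.d 0 (-1)).hom), C.X 0, fsub, π, ?_, h1 0, ?_⟩
  · exact gp_iso (ModuleCat.kernelIsoKer (C.d 0 (-1))).symm (gp_shift C h1 h2 h3 0)
  · have w : fsub ≫ π = 0 := by
      ext s
      show π (fsub s) = 0
      have hm : fsub s ∈ LinearMap.ker (C.d 0 (-1)).hom := s.2
      have hm2 : fsub s ∈ LinearMap.ker π.hom := by rw [hπk]; exact hm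
      exact hm2
    refine ⟨w, ShortComplex.ShortExact.mk' ?_ ?_ ?_⟩
    · rw [ShortComplex.moduleCat_exact_iff_range_eq_ker]
      show LinearMap.range (LinearMap.ker (C.d 0 (-1)).hom).subtype = LinearMap.ker π.hom
      rw [Submodule.range_subtype, hπk]
    · exact (ModuleCat.mono_iff_injective fsub).2 Subtype.val_injective
    · exact (ModuleCat.epi_iff_surjective _).2 hπs

/-- Part 5: every GP module embeds in a projective with GP cokernel. -/
lemma ses_into (N : ModuleCat.{u} R) (hN : IsGorensteinProj N) :
    ∃ (P K : ModuleCat.{u} R) (f : N ⟶ P) (g : P ⟶ K),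
      Projective P ∧ IsGorensteinProj K ∧ IsSES f g := by
  obtain ⟨C, h1, h2, h3, ⟨e⟩⟩ := hN
  set κ := ModuleCat.kernelIsoKer (C.d (-1) (-2)) with hκ
  set sub : ModuleCat.of R (LinearMap.ker (C.d (-1) (-2)).hom) ⟶ C.X (-1) :=
    ModuleCat.ofHom ((LinearMap.ker (C.d (-1) (-2)).hom).subtype :
      ↥(LinearMap.ker (C.d (-1) (-2)).hom) →ₗ[R] C.X (-1)) with hsub
  have hmem : ∀ y : ModuleCat.of R (LinearMap.ker (C.d (-1) (-2)).hom),
      C.d (-1) (-2) (sub y) = 0 := fun y => y.2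
  set f0 : N ⟶ C.X (-1) := e.hom ≫ κ.hom ≫ sub with hf0
  set g0 : C.X (-1) ⟶ ModuleCat.of R (LinearMap.ker (C.d (-2) (-3)).hom) :=
    ModuleCat.ofHom (LinearMap.codRestrict (LinearMap.ker (C.d (-2) (-3)).hom) (C.d (-1) (-2)).hom
      (fun x => by
        have := ConcreteCategory.congr_hom (C.d_comp_d (-1) (-2) (-3)) x
        exact this) : ↑(C.X (-1)) →ₗ[R] LinearMap.ker (C.d (-2) (-3)).hom) with hg0
  set sub2 : ModuleCat.of R (LinearMap.ker (C.d (-2) (-3)).hom) ⟶ C.X (-2) :=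
    ModuleCat.ofHom ((LinearMap.ker (C.d (-2) (-3)).hom).subtype :
      ↥(LinearMap.ker (C.d (-2) (-3)).hom) →ₗ[R] C.X (-2)) with hsub2
  have hsub2inj : Function.Injective sub2 := Subtype.val_injective
  have hg0app : ∀ y : C.X (-1), sub2 (g0 y) = C.d (-1) (-2) y := fun y => rfl
  have hkerg0 : ∀ y : C.X (-1), g0 y = 0 ↔ C.d (-1) (-2) y = 0 := by
    intro y
    constructor
    · intro hy
      rw [← hg0app y, hy, map_zero]
    · intro hy
      apply hsub2inj
      rw [hg0app, hy, map_zero]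
  refine ⟨C.X (-1), ModuleCat.of R (LinearMap.ker (C.d (-2) (-3)).hom), f0, g0, h1 (-1),
    gp_iso (ModuleCat.kernelIsoKer (C.d (-2) (-3))).symm (gp_shift C h1 h2 h3 (-2)), ?_⟩
  have w : f0 ≫ g0 = 0 := by
    refine ModuleCat.hom_ext (LinearMap.ext fun x => ?_)
    show g0 (sub (κ.hom (e.hom x))) = 0
    rw [hkerg0]
    exact hmem _
  refine ⟨w, ShortComplex.ShortExact.mk' ?_ ?_ ?_⟩
  · rw [ShortComplex.moduleCat_exact_iff_range_eq_ker]
    show LinearMap.range f0.hom = LinearMap.ker g0.hom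
    ext y
    rw [LinearMap.mem_ker]
    constructor
    · rintro ⟨u, rfl⟩
      show g0 (sub (κ.hom (e.hom u))) = 0
      rw [hkerg0]
      exact hmem _
    · intro hy
      rw [hkerg0] at hy
      refine ⟨e.inv (κ.inv ⟨y, hy⟩), ?_⟩
      show sub (κ.hom (e.hom (e.inv (κ.inv ⟨y, hy⟩)))) = y
      have he : e.hom (e.inv (κ.inv ⟨y, hy⟩)) = κ.inv ⟨y, hy⟩ :=
        ConcreteCategory.congr_hom e.inv_hom_id (κ.inv ⟨y, hy⟩)
      rw [he]
      have hκ2 : κ.hom (κ.inv ⟨y, hy⟩) = ⟨y, hy⟩ :=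
        ConcreteCategory.congr_hom κ.inv_hom_id ⟨y, hy⟩
      rw [hκ2]
      rfl
  · refine (ModuleCat.mono_iff_injective f0).2 ?_
    have i1 : Function.Injective e.hom := (ModuleCat.mono_iff_injective e.hom).1 inferInstance
    have i2 : Function.Injective κ.hom := (ModuleCat.mono_iff_injective κ.hom).1 inferInstance
    have i3 : Function.Injective sub := Subtype.val_injective
    exact fun a b hab => i1 (i2 (i3 hab))
  · refine (ModuleCat.epi_iff_surjective g0).2 ?_
    rintro ⟨v, hv⟩
    obtain ⟨u, hu⟩ := exact_sc C h2 (-1) (-2) (-3) (by omega) (by omega) v hv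
    refine ⟨u, hsub2inj ?_⟩
    rw [hg0app, hu]
    rfl

end GPaux

/-- `𝒢𝒫(R)` with the exact structure inherited from short exact
sequences of modules is a Frobenius exact category whose projective-injective
objects are exactly the projective `R`-modules. -/
theorem stmt17 :
    (∀ P : ModuleCat.{u} R, Projective P → IsGorensteinProj P) ∧
    (∀ G : ModuleCat.{u} R, IsGorensteinProj G → (GPrelProj G ↔ Projective G)) ∧
    (∀ G : ModuleCat.{u} R, IsGorensteinProj G → (GPrelInj G ↔ Projective G)) ∧
    (∀ N : ModuleCat.{u} R, IsGorensteinProj N →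
      ∃ (K P : ModuleCat.{u} R) (f : K ⟶ P) (g : P ⟶ N),
        IsGorensteinProj K ∧ Projective P ∧ IsSES f g) ∧
    (∀ N : ModuleCat.{u} R, IsGorensteinProj N →
      ∃ (P K : ModuleCat.{u} R) (f : N ⟶ P) (g : P ⟶ K),
        Projective P ∧ IsGorensteinProj K ∧ IsSES f g) := by
  refine ⟨GPaux.proj_isGP, ?_, ?_, GPaux.ses_onto, GPaux.ses_into⟩
  · -- relative projectives are exactly the projective modules
    intro G hG
    constructor
    · rintro ⟨-, hlift⟩
      obtain ⟨K, P, f, g, hK, hP, hses⟩ := GPaux.ses_onto G hG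
      have gps : GPses f g := ⟨hses, hK, GPaux.proj_isGP P hP, hG⟩
      obtain ⟨k, hk⟩ := hlift f g gps (𝟙 G)
      haveI := hP
      exact
        { factors := fun {E X'} u ep _ => by
            obtain ⟨l, hl⟩ := Projective.factors (g ≫ u) ep
            exact ⟨k ≫ l, by rw [Category.assoc, hl, ← Category.assoc, hk,
              Category.id_comp]⟩ }
    · intro hPG
      refine ⟨hG, ?_⟩
      intro X Y Z f g hgp h
      obtain ⟨w, hse⟩ := hgp.1
      haveI : Epi g := hse.epi_g
      haveI := hPG
      exact ⟨Projective.factorThru h g, Projective.factorThru_comp _ _⟩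
  · -- relative injectives are exactly the projective modules
    intro G hG
    constructor
    · rintro ⟨-, hlift⟩
      obtain ⟨P, K, f, g, hP, hK, hses⟩ := GPaux.ses_into G hG
      have gps : GPses f g := ⟨hses, hG, GPaux.proj_isGP P hP, hK⟩
      obtain ⟨k, hk⟩ := hlift f g gps (𝟙 G)
      haveI := hP
      exact
        { factors := fun {E X'} u ep _ => by
            obtain ⟨l, hl⟩ := Projective.factors (k ≫ u) ep
            exact ⟨f ≫ l, by rw [Category.assoc, hl, ← Category.assoc, hk,
              Category.id_comp]⟩ }
    · intro hPG
      exact ⟨hG, fun X Y Z f g hgp h => GPaux.key_ext f g hgp.1 hgp.2.2.2 hPG h⟩
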